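/- Let θ > 0 and q > θ be constants, and let (φ, w) : I → (0, ∞) × ℝ be a C¹ solution, on an interval I ⊆ ℝ, of the system φ′ = φ·w, w′ = −θ·w² − φ^{−2q}. Then the quantity I_{θ,q}(φ, w) := φ^{2θ}·w² − (q − θ)^{−1}·φ^{−2(q−θ)} is constant along the solution, i.e. the function t ↦ I_{θ,q}(φ(t), w(t)) is constant on I. -/

import Mathlib

noncomputable section

open Filter Metric Polynomial MeasureTheory
open scoped Topology

namespace CLL

abbrev E (d : ℕ) := EuclideanSpace ℝ (Fin d)

/-- One-sided partial derivative (within a set `s`) in the `i`-th coordinate direction. -/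
def pd (d : ℕ) (s : Set (E d)) (v : E d → ℝ) (i : Fin d) (x : E d) : ℝ :=
  fderivWithin ℝ v s x (EuclideanSpace.single i 1)

/-- The Möbius Hessian `A[v] = e^{-2v} (-∇² v + ∇v ⊗ ∇v - |∇v|²/2 · I)`,
computed with derivatives within `s`. -/
def mHess (d : ℕ) (s : Set (E d)) (v : E d → ℝ) (x : E d) : Matrix (Fin d) (Fin d) ℝ :=
  fun i j =>
    Real.exp (-2 * v x) *
      (-(pd d s (fun y => pd d s v j y) i x)
        + pd d s v i x * pd d s v j x
        - (1 / 2) * (∑ k, (pd d s v k x) ^ 2) * (if i = j then (1 : ℝ) else 0))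

/-- `μ` lists the eigenvalues (with multiplicity, in some order) of the matrix `M`. -/
def IsEigList (d : ℕ) (M : Matrix (Fin d) (Fin d) ℝ) (μ : Fin d → ℝ) : Prop :=
  M.charpoly = ∏ i, (X - C (μ i))

/-- `λ* = (1, -1, …, -1)`. -/
def lamStar (d : ℕ) : Fin d → ℝ := fun i => if (i : ℕ) = 0 then 1 else -1

/-- Condition (C): `Γ ⊊ ℝⁿ` is a nonempty open symmetric cone with vertex at the origin
satisfying `Γ + Γₙ ⊆ Γ`. -/
def CondC (d : ℕ) (Γ : Set (Fin d → ℝ)) : Prop :=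
  Γ.Nonempty ∧ Γ ≠ Set.univ ∧ IsOpen Γ ∧
    (∀ t : ℝ, 0 < t → ∀ lam ∈ Γ, t • lam ∈ Γ) ∧
    (∀ σ : Equiv.Perm (Fin d), ∀ lam ∈ Γ, lam ∘ σ ∈ Γ) ∧
    (∀ lam ∈ Γ, ∀ μ : Fin d → ℝ, (∀ i, 0 < μ i) → lam + μ ∈ Γ)

/-- Condition (F): `f` is symmetric on `Γ`, locally Lipschitz, and for each compact
`K ⊆ Γ` its partial derivatives are bounded below a.e. on `K` by a positive constant. -/
def CondF (d : ℕ) (Γ : Set (Fin d → ℝ)) (f : (Fin d → ℝ) → ℝ) : Prop :=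
  (∀ σ : Equiv.Perm (Fin d), ∀ lam ∈ Γ, f (lam ∘ σ) = f lam) ∧
  (∀ lam ∈ Γ, ∃ K : NNReal, ∃ t ∈ nhdsWithin lam Γ, LipschitzOnWith K f t) ∧
  (∀ K : Set (Fin d → ℝ), K ⊆ Γ → IsCompact K →
    ∃ c > (0 : ℝ), ∀ᵐ lam ∂(volume.restrict K),
      ∀ i : Fin d, c ≤ lineDeriv ℝ f lam (Pi.single i 1))

/-- The index of the last coordinate. -/
def lastIdx (n : ℕ) : Fin (n + 2) := Fin.last (n + 1)

/-- The open upper half space `ℝⁿ₊`. -/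
def upperH (n : ℕ) : Set (E (n + 2)) := {x | 0 < x (lastIdx n)}

/-- The standard bubble `log (a / (1 + b |x - x̄|²))`. -/
def bubble (n : ℕ) (a b : ℝ) (xbar : E (n + 2)) (x : E (n + 2)) : ℝ :=
  Real.log (a / (1 + b * ‖x - xbar‖ ^ 2))

/-- The open upper half ball `B_r⁺`. -/
def Bplus (n : ℕ) (r : ℝ) : Set (E (n + 2)) := Metric.ball 0 r ∩ upperH n

/-- The set defining `μ_Γ⁻`. -/
def muSet (d : ℕ) (Γ : Set (Fin d → ℝ)) : Set ℝ :=
  {c : ℝ | (fun i : Fin d => if (i : ℕ) = 0 then c else -1) ∈ closure Γ}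

/-- `μ_Γ⁻ = inf { c : (c,-1,…,-1) ∈ closure Γ }`. -/
def muMinus (d : ℕ) (Γ : Set (Fin d → ℝ)) : ℝ :=
  sInf (muSet d Γ)

end CLL

open CLL

/-- The first integral `I_{θ,q}(φ,w) = φ^{2θ} w² - (q-θ)⁻¹ φ^{-2(q-θ)}` is constant along
solutions of `φ' = φ w`, `w' = -θ w² - φ^{-2q}` (proof of Lemma 4.5 of the paper). -/
theorem stmt19 (θ q : ℝ) (hθ : 0 < θ) (hq : θ < q) (I : Set ℝ) (hI : I.OrdConnected)
    (φ w : ℝ → ℝ) (hφpos : ∀ t ∈ I, 0 < φ t)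
    (hφ : ∀ t ∈ I, HasDerivWithinAt φ (φ t * w t) I t)
    (hw : ∀ t ∈ I, HasDerivWithinAt w (-θ * w t ^ 2 - φ t ^ (-(2 * q))) I t) :
    ∀ s ∈ I, ∀ t ∈ I,
      φ s ^ (2 * θ) * w s ^ 2 - (q - θ)⁻¹ * φ s ^ (-(2 * (q - θ)))
        = φ t ^ (2 * θ) * w t ^ 2 - (q - θ)⁻¹ * φ t ^ (-(2 * (q - θ))) := by
  intro s hs t ht
  rcases eq_or_ne s t with rfl | hst
  · rfl
  set F : ℝ → ℝ := fun u => φ u ^ (2 * θ) * w u ^ 2 - (q - θ)⁻¹ * φ u ^ (-(2 * (q - θ)))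
    with hF
  -- derivative of F within I is zero
  have key : ∀ u ∈ I, HasDerivWithinAt F 0 I u := by
    intro u hu
    have hp : 0 < φ u := hφpos u hu
    have h1 : HasDerivWithinAt (fun y => φ y ^ (2 * θ))
        ((φ u * w u) * (2 * θ) * φ u ^ (2 * θ - 1)) I u :=
      (hφ u hu).rpow_const (Or.inl hp.ne')
    have h2 : HasDerivWithinAt (fun y => w y ^ 2)
        (2 * w u ^ 1 * (-θ * w u ^ 2 - φ u ^ (-(2 * q)))) I u := by
      simpa using (hw u hu).fun_pow 2
    have h3 : HasDerivWithinAt (fun y => φ y ^ (-(2 * (q - θ))))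
        ((φ u * w u) * (-(2 * (q - θ))) * φ u ^ (-(2 * (q - θ)) - 1)) I u :=
      (hφ u hu).rpow_const (Or.inl hp.ne')
    have hD := (h1.mul h2).sub (h3.const_mul ((q - θ)⁻¹))
    refine hD.congr_deriv ?_
    symm
    have e1 : φ u ^ (2 * θ - 1) * φ u = φ u ^ (2 * θ) := by
      rw [show (2*θ) = (2*θ-1)+1 by ring, Real.rpow_add_one hp.ne']; ring_nf
    have e2 : φ u ^ (2 * θ) * φ u ^ (-(2 * q)) = φ u ^ (-(2 * (q - θ))) := by
      rw [← Real.rpow_add hp]; ring_nf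
    have e3 : φ u ^ (-(2 * (q - θ)) - 1) * φ u = φ u ^ (-(2 * (q - θ))) := by
      rw [show (-(2*(q-θ))) = (-(2*(q-θ))-1)+1 by ring, Real.rpow_add_one hp.ne']; ring_nf
    have hqθ : q - θ ≠ 0 := sub_ne_zero.mpr hq.ne'
    have hinv : (q - θ)⁻¹ * (q - θ) = 1 := inv_mul_cancel₀ hqθ
    linear_combination (-2*θ*(w u)^3) * e1 + (2*(w u)) * e2 - (2*(w u)) * e3
      - (2*(w u)*(φ u ^ (-(2*(q-θ))-1))*(φ u)) * hinv
  -- restrict to the segment between s and t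
  have hJI : Set.uIcc s t ⊆ I := hI.uIcc_subset hs ht
  have hlt : min s t < max s t := min_lt_max.mpr hst
  have hud : UniqueDiffOn ℝ (Set.uIcc s t) := by
    rw [Set.uIcc]
    exact uniqueDiffOn_Icc hlt
  have hconv : Convex ℝ (Set.uIcc s t) := convex_uIcc s t
  have hdiff : DifferentiableOn ℝ F (Set.uIcc s t) := fun u hu =>
    ((key u (hJI hu)).mono hJI).differentiableWithinAt
  have hzero : ∀ u ∈ Set.uIcc s t, fderivWithin ℝ F (Set.uIcc s t) u = 0 := by
    intro u hu
    rw [((key u (hJI hu)).mono hJI).hasFDerivWithinAt.fderivWithin (hud u hu)]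
    ext
    simp
  exact hconv.is_const_of_fderivWithin_eq_zero hdiff hzero Set.left_mem_uIcc
    Set.right_mem_uIcc
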